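/- Let A be an n-by-n reciprocal matrix with n ≥ 4, and let w be an efficient vector for A. Then for every p ∈ {3,…,n−1} there exist two distinct subsets K_1, K_2 ⊂ {1,…,n}, each of cardinality p, such that w[K_1] is efficient for A[K_1] and w[K_2] is efficient for A[K_2]. -/

import Mathlib

def PosVec {ι : Type*} (w : ι → ℝ) : Prop := ∀ i, 0 < w i

def IsReciprocal {ι : Type*} (A : Matrix ι ι ℝ) : Prop :=
  (∀ i j, 0 < A i j) ∧ ∀ i j, A j i = 1 / A i j

def IsEfficient {ι : Type*} (A : Matrix ι ι ℝ) (w : ι → ℝ) : Prop :=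
  PosVec w ∧ ∀ v : ι → ℝ, PosVec v →
    (∀ i j, |A i j - v i / v j| ≤ |A i j - w i / w j|) →
    ∃ c : ℝ, 0 < c ∧ v = c • w

/-- The principal submatrix `A[K]` of `A` obtained by retaining the rows and columns indexed
by `K`. -/
def keepMat {n : ℕ} (A : Matrix (Fin n) (Fin n) ℝ) (K : Finset (Fin n)) :
    Matrix {i : Fin n // i ∈ K} {i : Fin n // i ∈ K} ℝ :=
  Matrix.of fun a b => A a.1 b.1

/-- The subvector `w[K]` of `w` obtained by retaining the entries indexed by `K`. -/
def keepVec {n : ℕ} (w : Fin n → ℝ) (K : Finset (Fin n)) : {i : Fin n // i ∈ K} → ℝ :=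
  fun a => w a.1

section Digraph
variable {V : Type*} (r : V → V → Prop)
def rK (K : Finset V) : V → V → Prop := fun x y => x ∈ K ∧ y ∈ K ∧ r x y
def StrongOn (K : Finset V) : Prop :=
  ∀ a ∈ K, ∀ b ∈ K, Relation.ReflTransGen (rK r K) a b
variable {r}

lemma reach_stays {S : Set V} (hS : ∀ a ∈ S, ∀ b, r a b → b ∈ S) {a b : V}
    (ha : a ∈ S) (hab : Relation.ReflTransGen r a b) : b ∈ S := by
  induction hab with
  | refl => exact ha
  | tail _ h ih => exact hS _ ih _ h

lemma strongOn_univ_reach [Fintype V] (h : StrongOn r Finset.univ) (a b : V) :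
    Relation.ReflTransGen r a b :=
  Relation.ReflTransGen.mono (r := rK r Finset.univ) (fun _ _ hx => hx.2.2) a b (h a (Finset.mem_univ a) b (Finset.mem_univ b))

open Fin.CommRing in
lemma cycle_strong {m : ℕ} [DecidableEq V] (c : Fin (m+1) → V)
    (harc : ∀ i, r (c i) (c (i+1))) :
    StrongOn r (Finset.image c Finset.univ) := by
  intro a ha b hb
  obtain ⟨i, -, rfl⟩ := Finset.mem_image.mp ha
  obtain ⟨j, -, rfl⟩ := Finset.mem_image.mp hb
  have key : ∀ t : ℕ, Relation.ReflTransGen (rK r (Finset.image c Finset.univ))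
      (c i) (c (i + (t : Fin (m+1)))) := by
    intro t
    induction t with
    | zero => simpa using Relation.ReflTransGen.refl
    | succ t ih =>
        have : ((t+1 : ℕ) : Fin (m+1)) = (t : Fin (m+1)) + 1 := by push_cast; ring
        rw [this, ← add_assoc]
        exact ih.tail ⟨Finset.mem_image_of_mem c (Finset.mem_univ _),
          Finset.mem_image_of_mem c (Finset.mem_univ _), harc _⟩
  have : j = i + ((j - i).val : Fin (m+1)) := by simp [Fin.cast_val_eq_self]
  rw [this]; exact key _

open Fin.CommRing in
lemma exists_switch {m : ℕ} (hsemi : ∀ a b : V, a ≠ b → r a b ∨ r b a)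
    (c : Fin (m+1) → V) (v : V) (hv : ∀ i, c i ≠ v)
    (hin : ∃ i, r (c i) v) (hout : ∃ j, r v (c j)) :
    ∃ i, r (c i) v ∧ r v (c (i+1)) := by
  by_contra h
  push_neg at h
  obtain ⟨i₀, hi₀⟩ := hin
  have key : ∀ t : ℕ, r (c (i₀ + (t : Fin (m+1)))) v := by
    intro t; induction t with
    | zero => simpa using hi₀
    | succ t ih =>
      have hc : ((t+1:ℕ) : Fin (m+1)) = (t : Fin (m+1)) + 1 := by push_cast; ring
      rw [hc, ← add_assoc]
      rcases hsemi (c (i₀ + (t:Fin (m+1)) + 1)) v (hv _) with h' | h'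
      · exact h'
      · exact absurd h' (h _ ih)
  have hall : ∀ j', r (c j') v := by
    intro j'
    have hj' : j' = i₀ + (((j' - i₀).val : ℕ) : Fin (m+1)) := by
      simp [Fin.cast_val_eq_self]
    rw [hj']; exact key _
  obtain ⟨j, hj⟩ := hout
  have := h (j - 1) (hall _)
  rw [sub_add_cancel] at this
  exact this hj

open Fin.CommRing in
lemma extend_cycle {m : ℕ} [Fintype V] [DecidableEq V]
    (hsemi : ∀ a b : V, a ≠ b → r a b ∨ r b a)
    (hstrong : StrongOn r Finset.univ)
    (c : Fin (m+3) → V) (hinj : Function.Injective c)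
    (harc : ∀ i, r (c i) (c (i+1))) (x : V) (hx : ∃ i, c i = x)
    (hlt : m + 3 < Fintype.card V) :
    ∃ c' : Fin (m+4) → V, Function.Injective c' ∧ (∀ i, r (c' i) (c' (i+1))) ∧
      ∃ i, c' i = x := by
  have houtside : ∃ v : V, ∀ i, c i ≠ v := by
    by_contra h; push_neg at h
    have hsurj : Function.Surjective c := fun v => h v
    have := Fintype.card_le_of_surjective c hsurj
    simp only [Fintype.card_fin] at this
    omega
  by_cases h1 : ∃ v : V, (∀ i, c i ≠ v) ∧ (∃ i, r (c i) v) ∧ (∃ j, r v (c j))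
  · -- Case 1 : insert v after a switch position
    obtain ⟨v, hv, hvin, hvout⟩ := h1
    obtain ⟨m₀, hm₀1, hm₀2⟩ := exists_switch hsemi c v hv hvin hvout
    set b : Fin (m+3) → V := fun i => c (i + (m₀ + 1)) with hb
    have hbinj : Function.Injective b := fun a a' h => add_right_cancel (hinj h)
    have hbarc : ∀ i, r (b i) (b (i+1)) := by
      intro i; simp only [hb]
      have h' : i + 1 + (m₀+1) = (i + (m₀+1)) + 1 := by ring
      rw [h']; exact harc _
    have hbv : ∀ i, b i ≠ v := fun i => hv _
    set d : Fin (m+4) → V := fun j => if h : (j : ℕ) < m + 3 then b ⟨j, h⟩ else v with hd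
    refine ⟨d, ?_, ?_, ?_⟩
    · intro a a' hEq
      have ha4 := a.isLt; have ha'4 := a'.isLt
      simp only [hd] at hEq
      by_cases ha : (a:ℕ) < m+3 <;> by_cases ha' : (a':ℕ) < m+3
      · rw [dif_pos ha, dif_pos ha'] at hEq
        have := congrArg Fin.val (hbinj hEq)
        exact Fin.ext this
      · rw [dif_pos ha, dif_neg ha'] at hEq
        exact absurd hEq (hbv _)
      · rw [dif_neg ha, dif_pos ha'] at hEq
        exact absurd hEq.symm (hbv _)
      · apply Fin.ext; omega
    · intro j
      have hj4 := j.isLt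
      rcases lt_trichotomy (j:ℕ) (m+2) with hj | hj | hj
      · have h1' : (j:ℕ) < m+3 := by omega
        have hsucc : ((j+1 : Fin (m+4)) : ℕ) = (j:ℕ) + 1 := by
          rw [Fin.val_add_one_of_lt]; simp [Fin.lt_def]; omega
        have h2' : ((j+1 : Fin (m+4)) : ℕ) < m+3 := by omega
        simp only [hd, dif_pos h1', dif_pos h2']
        have hidx : (⟨((j+1 : Fin (m+4)) : ℕ), h2'⟩ : Fin (m+3)) = ⟨(j:ℕ), h1'⟩ + 1 := by
          apply Fin.ext
          simp only [Fin.add_def, Fin.val_one, hsucc]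
          rw [Nat.mod_eq_of_lt (by omega : (j:ℕ)+1 < m+4), Nat.mod_eq_of_lt (by omega : (j:ℕ)+1 < m+3)]
        rw [hidx]; exact hbarc _
      · -- j.val = m+2 : from b (last) = c m₀ to v
        have h1' : (j:ℕ) < m+3 := by omega
        have hsucc : ((j+1 : Fin (m+4)) : ℕ) = (j:ℕ) + 1 := by
          rw [Fin.val_add_one_of_lt]; simp [Fin.lt_def]; omega
        have h2' : ¬ ((j+1 : Fin (m+4)) : ℕ) < m+3 := by omega
        simp only [hd, dif_pos h1', dif_neg h2']
        have hX : (⟨(j:ℕ), h1'⟩ : Fin (m+3)) = -1 := by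
          have hz : (⟨(j:ℕ), h1'⟩ : Fin (m+3)) + 1 = 0 := by
            apply Fin.ext
            simp only [Fin.add_def, Fin.val_one, Fin.val_zero, hj]
            simp [Nat.mod_self]
          exact eq_neg_of_add_eq_zero_left hz
        have hlast : b ⟨(j:ℕ), h1'⟩ = c m₀ := by
          simp only [hb, hX]; congr 1; ring
        rw [hlast]; exact hm₀1
      · -- j.val = m+3 : from v back to b 0 = c (m₀+1)
        have hj' : (j:ℕ) = m+3 := by omega
        have h1' : ¬ (j:ℕ) < m+3 := by omega
        have hj0 : ((j+1 : Fin (m+4)) : ℕ) = 0 := by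
          simp [Fin.add_def, hj']
        have h2' : ((j+1 : Fin (m+4)) : ℕ) < m+3 := by omega
        simp only [hd, dif_neg h1', dif_pos h2']
        have hz : (⟨((j+1 : Fin (m+4)) : ℕ), h2'⟩ : Fin (m+3)) = 0 := Fin.ext (by simp [hj0])
        have : b ⟨((j+1 : Fin (m+4)) : ℕ), h2'⟩ = c (m₀+1) := by
          simp only [hb, hz, zero_add]
        rw [this]; exact hm₀2
    · obtain ⟨i, hi⟩ := hx
      have hlt' : ((i - (m₀+1)).val) < m + 4 := by
        have := (i - (m₀+1)).isLt; omega
      refine ⟨⟨(i - (m₀+1)).val, hlt'⟩, ?_⟩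
      have h1' : (((⟨(i - (m₀+1)).val, hlt'⟩ : Fin (m+4))) : ℕ) < m+3 := (i - (m₀+1)).isLt
      simp only [hd, dif_pos h1']
      have : (⟨(i - (m₀+1)).val, (i - (m₀+1)).isLt⟩ : Fin (m+3)) = i - (m₀+1) := by
        apply Fin.ext; rfl
      rw [show (⟨(((⟨(i - (m₀+1)).val, hlt'⟩ : Fin (m+4))) : ℕ), h1'⟩ : Fin (m+3)) = i - (m₀+1) from Fin.ext rfl]
      simp only [hb]
      rw [sub_add_cancel]
      exact hi
  · push_neg at h1
    set P : V → Prop := fun z => (∀ i, c i ≠ z) ∧ ∀ j, ¬ r z (c j) with hPdef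
    set Q : V → Prop := fun z => (∀ i, c i ≠ z) ∧ ∀ i, ¬ r (c i) z with hQdef
    have hPQ : ∀ z, (∀ i, c i ≠ z) → P z ∨ Q z := by
      intro z hz
      by_cases hin : ∃ i, r (c i) z
      · exact Or.inl ⟨hz, h1 z hz hin⟩
      · push_neg at hin; exact Or.inr ⟨hz, hin⟩
    have hPin : ∀ z, P z → ∀ i, r (c i) z :=
      fun z hp i => (hsemi (c i) z (hp.1 i)).resolve_right (hp.2 i)
    have hQout : ∀ z, Q z → ∀ i, r z (c i) :=
      fun z hq i => (hsemi z (c i) (fun h => hq.1 i h.symm)).resolve_right (hq.2 i)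
    by_cases h2 : ∃ u q0, P u ∧ Q q0 ∧ r u q0
    · obtain ⟨u, q0, hu, hq0, huq⟩ := h2
      obtain ⟨i₀, hi₀⟩ := hx
      have huq0 : u ≠ q0 := by
        rintro rfl
        rcases hsemi (c 0) u (hu.1 0) with h' | h'
        · exact hq0.2 0 h'
        · exact hu.2 0 h'
      set b : Fin (m+3) → V := fun i => c (i + i₀) with hb
      have hbinj : Function.Injective b := fun a a' h => add_right_cancel (hinj h)
      have hbarc : ∀ i, r (b i) (b (i+1)) := by
        intro i; simp only [hb]
        have h' : i + 1 + i₀ = (i + i₀) + 1 := by ring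
        rw [h']; exact harc _
      have hbu : ∀ i, b i ≠ u := fun i => hu.1 _
      have hbq : ∀ i, b i ≠ q0 := fun i => hq0.1 _
      have hPb : ∀ i : Fin (m+3), r (b i) u := by
        intro i; simp only [hb]; exact hPin u hu _
      have hQb : ∀ i : Fin (m+3), r q0 (b i) := by
        intro i; simp only [hb]; exact hQout q0 hq0 _
      set d : Fin (m+4) → V := fun j =>
        if (j:ℕ) = 1 then u else if (j:ℕ) = 2 then q0
        else b ⟨(j:ℕ) - 1, by have := j.isLt; omega⟩ with hd
      refine ⟨d, ?_, ?_, ⟨0, ?_⟩⟩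
      · intro a a' hEq
        have ha4 := a.isLt; have ha'4 := a'.isLt
        simp only [hd] at hEq
        by_cases e1 : (a:ℕ) = 1 <;> by_cases f1 : (a':ℕ) = 1 <;>
          by_cases e2 : (a:ℕ) = 2 <;> by_cases f2 : (a':ℕ) = 2 <;>
          simp only [e1, f1, e2, f2, if_true, if_false, reduceIte] at hEq <;>
          first
          | (apply Fin.ext; omega)
          | (exact absurd hEq huq0)
          | (exact absurd hEq.symm huq0)
          | (exact absurd hEq.symm (hbu _))
          | (exact absurd hEq (hbu _))
          | (exact absurd hEq.symm (hbq _))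
          | (exact absurd hEq (hbq _))
          | (have hval := congrArg Fin.val (hbinj hEq); simp only [] at hval;
             apply Fin.ext; omega)
      · intro j
        have hj4 := j.isLt
        by_cases hj0 : (j:ℕ) = 0
        · have hsucc : ((j+1:Fin (m+4)):ℕ) = (j:ℕ) + 1 := by
            rw [Fin.val_add_one_of_lt]; simp [Fin.lt_def]; omega
          simp only [hd, hsucc]
          rw [if_neg (by omega : ¬ (j:ℕ) = 1), if_neg (by omega : ¬ (j:ℕ) = 2),
            if_pos (by omega : (j:ℕ) + 1 = 1)]
          exact hPb _
        · by_cases hj1 : (j:ℕ) = 1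
          · have hsucc : ((j+1:Fin (m+4)):ℕ) = (j:ℕ) + 1 := by
              rw [Fin.val_add_one_of_lt]; simp [Fin.lt_def]; omega
            simp only [hd, hsucc]
            rw [if_pos hj1, if_neg (by omega : ¬ (j:ℕ) + 1 = 1),
              if_pos (by omega : (j:ℕ) + 1 = 2)]
            exact huq
          · by_cases hj2 : (j:ℕ) = 2
            · have hsucc : ((j+1:Fin (m+4)):ℕ) = (j:ℕ) + 1 := by
                rw [Fin.val_add_one_of_lt]; simp [Fin.lt_def]; omega
              simp only [hd, hsucc]
              rw [if_neg (by omega : ¬ (j:ℕ) = 1), if_pos hj2,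
                if_neg (by omega : ¬ (j:ℕ) + 1 = 1), if_neg (by omega : ¬ (j:ℕ) + 1 = 2)]
              exact hQb _
            · by_cases hjtop : (j:ℕ) = m + 3
              · have hzero : ((j+1:Fin (m+4)):ℕ) = 0 := by
                  simp only [Fin.add_def, Fin.val_one, hjtop]
                  simp [Nat.mod_self]
                simp only [hd, hzero]
                rw [if_neg (by omega : ¬ (j:ℕ) = 1), if_neg (by omega : ¬ (j:ℕ) = 2),
                  if_neg (by omega : ¬ (0:ℕ) = 1), if_neg (by omega : ¬ (0:ℕ) = 2)]
                have hidx : (⟨(0:ℕ) - 1, by omega⟩ : Fin (m+3)) =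
                    (⟨(j:ℕ) - 1, by omega⟩ : Fin (m+3)) + 1 := by
                  apply Fin.ext
                  simp only [Fin.add_def, Fin.val_one, hjtop]
                  simp [Nat.mod_self]
                rw [hidx]
                exact hbarc _
              · -- 3 ≤ j.val ≤ m+2
                have hsucc : ((j+1:Fin (m+4)):ℕ) = (j:ℕ) + 1 := by
                  rw [Fin.val_add_one_of_lt]; simp [Fin.lt_def]; omega
                simp only [hd, hsucc]
                rw [if_neg (by omega : ¬ (j:ℕ) = 1), if_neg (by omega : ¬ (j:ℕ) = 2),
                  if_neg (by omega : ¬ (j:ℕ) + 1 = 1), if_neg (by omega : ¬ (j:ℕ) + 1 = 2)]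
                have hidx : (⟨(j:ℕ) + 1 - 1, by omega⟩ : Fin (m+3)) =
                    (⟨(j:ℕ) - 1, by omega⟩ : Fin (m+3)) + 1 := by
                  apply Fin.ext
                  simp only [Fin.add_def, Fin.val_one]
                  rw [Nat.mod_eq_of_lt (by omega : (j:ℕ) - 1 + 1 < m+3)]
                  omega
                rw [hidx]
                exact hbarc _
      · simp only [hd]
        rw [if_neg (by simp : ¬ ((0 : Fin (m+4)):ℕ) = 1),
          if_neg (by simp : ¬ ((0 : Fin (m+4)):ℕ) = 2)]
        have hidx : (⟨((0 : Fin (m+4)):ℕ) - 1, by omega⟩ : Fin (m+3)) = 0 := by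
          apply Fin.ext; simp
        rw [hidx]
        simp only [hb, zero_add]
        exact hi₀
    · -- no arc from P to Q : contradicts strong connectivity
      exfalso
      push_neg at h2
      obtain ⟨v₀, hv₀⟩ := houtside
      obtain ⟨i₀, hi₀⟩ := hx
      rcases hPQ v₀ hv₀ with hP | hQ
      · -- the P-set is closed under successors; v₀ cannot reach x
        have hclosed : ∀ a ∈ {z | P z}, ∀ z, r a z → z ∈ {z | P z} := by
          intro a ha z hr
          have hzout : ∀ i, c i ≠ z := by
            intro i hiz
            exact ha.2 i (hiz ▸ hr)
          rcases hPQ z hzout with h' | h'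
          · exact h'
          · exact absurd hr (h2 a z ha h')
        have hxin : x ∈ {z | P z} :=
          reach_stays hclosed hP (strongOn_univ_reach hstrong v₀ x)
        exact hxin.1 i₀ hi₀
      · -- the complement of the Q-set is closed under successors; x cannot reach v₀
        have hclosed : ∀ a ∈ {z | ¬ Q z}, ∀ z, r a z → z ∈ {z | ¬ Q z} := by
          intro a ha z hr hQz
          by_cases hac : ∃ i, c i = a
          · obtain ⟨i, rfl⟩ := hac
            exact hQz.2 i hr
          · push_neg at hac
            rcases hPQ a hac with h' | h'
            · exact absurd hr (h2 a z h' hQz)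
            · exact ha h'
        have hxin : x ∈ {z | ¬ Q z} := by
          intro hQx
          exact hQx.1 i₀ hi₀
        have := reach_stays hclosed hxin (strongOn_univ_reach hstrong x v₀)
        exact this hQ
lemma exists_3cycle [Fintype V] [DecidableEq V]
    (hsemi : ∀ a b : V, a ≠ b → r a b ∨ r b a)
    (hstrong : StrongOn r Finset.univ) (hcard : 3 ≤ Fintype.card V) (x : V) :
    ∃ o i : V, x ≠ o ∧ o ≠ i ∧ i ≠ x ∧ r x o ∧ r o i ∧ r i x := by
  by_contra hcon
  push_neg at hcon
  set O : Set V := {v | v ≠ x ∧ r x v} with hO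
  set I : Set V := {v | v ≠ x ∧ r v x} with hI
  have Hoi : ∀ o ∈ O, ∀ i ∈ I, o ≠ i → ¬ r o i := by
    intro o ho i hi hne hr
    exact (hcon o i (Ne.symm ho.1) hne hi.1) ho.2 hr hi.2
  have hcover : ∀ v : V, v ≠ x → v ∈ O ∨ v ∈ I := by
    intro v hv
    rcases hsemi x v (Ne.symm hv) with h | h
    · exact Or.inl ⟨hv, h⟩
    · exact Or.inr ⟨hv, h⟩
  by_cases hIO : (I \ O).Nonempty
  · -- I\O cannot be entered; x can't reach it
    obtain ⟨s, hs⟩ := hIO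
    have hclosed : ∀ a ∈ (I \ O)ᶜ, ∀ b, r a b → b ∈ (I \ O)ᶜ := by
      intro a ha b hr hb
      rcases eq_or_ne a x with rfl | hax
      · exact hb.2 ⟨hb.1.1, hr⟩
      · rcases hcover a hax with hO' | hI'
        · exact Hoi a hO' b hb.1 (fun h => ha (h ▸ hb)) hr
        · by_cases haO : a ∈ O
          · exact Hoi a haO b hb.1 (fun h => ha (h ▸ hb)) hr
          · exact ha ⟨hI', haO⟩
    have : s ∈ (I \ O)ᶜ :=
      reach_stays hclosed (by simp [hI, hO]) (strongOn_univ_reach hstrong x s)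
    exact this hs
  · by_cases hOI : (O \ I).Nonempty
    · obtain ⟨s, hs⟩ := hOI
      have hclosed : ∀ a ∈ O \ I, ∀ b, r a b → b ∈ O \ I := by
        intro a ha b hr
        rcases eq_or_ne b x with rfl | hbx
        · exact absurd ⟨ha.1.1, hr⟩ ha.2
        · rcases hcover b hbx with hO' | hI'
          · refine ⟨hO', fun hbI => ?_⟩
            exact Hoi a ha.1 b hbI (fun h => ha.2 (h ▸ hbI)) hr
          · exact absurd hr (Hoi a ha.1 b hI' (fun h => ha.2 (h ▸ hI')) )
      have : x ∈ O \ I :=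
        reach_stays hclosed hs (strongOn_univ_reach hstrong s x)
      exact this.1.1 rfl
    · -- O = I; all non-x vertices pairwise non-adjacent: contradiction with card
      rw [Set.not_nonempty_iff_eq_empty, Set.diff_eq_empty] at hIO hOI
      have h2 : 1 < (Finset.univ.erase x).card := by
        have h := Finset.card_erase_of_mem (Finset.mem_univ x)
        have h' : (Finset.univ : Finset V).card = Fintype.card V := Finset.card_univ
        omega
      obtain ⟨y, hy, z, hz, hyz⟩ := Finset.one_lt_card.mp h2
      have hyx : y ≠ x := Finset.ne_of_mem_erase hy
      have hzx : z ≠ x := Finset.ne_of_mem_erase hz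
      have hyO : y ∈ O := (hcover y hyx).elim id (fun h => hIO h)
      have hzO : z ∈ O := (hcover z hzx).elim id (fun h => hIO h)
      have hzI : z ∈ I := hOI hzO
      have hyI : y ∈ I := hOI hyO
      rcases hsemi y z hyz with h | h
      · exact Hoi y hyO z hzI hyz h
      · exact Hoi z hzO y hyI hyz.symm h

lemma moon [Fintype V] [DecidableEq V]
    (hsemi : ∀ a b : V, a ≠ b → r a b ∨ r b a)
    (hstrong : StrongOn r Finset.univ) (x : V) (p : ℕ) (hp3 : 3 ≤ p)
    (hpn : p ≤ Fintype.card V) :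
    ∃ K : Finset V, x ∈ K ∧ K.card = p ∧ StrongOn r K := by
  obtain ⟨q, rfl⟩ : ∃ q, p = q + 3 := ⟨p - 3, by omega⟩
  have hcyc : ∀ q' : ℕ, q' + 3 ≤ Fintype.card V →
      ∃ c : Fin (q'+3) → V, Function.Injective c ∧ (∀ i, r (c i) (c (i+1))) ∧
        ∃ i, c i = x := by
    intro q'
    induction q' with
    | zero =>
      intro hle
      obtain ⟨o, i, h1, h2, h3, h4, h5, h6⟩ := exists_3cycle hsemi hstrong hle x
      refine ⟨![x, o, i], ?_, ?_, ⟨0, rfl⟩⟩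
      · intro a b hab
        fin_cases a <;> fin_cases b <;> simp_all
      · intro j
        fin_cases j
        · simpa using h4
        · simpa using h5
        · simpa using h6
    | succ q' ih =>
      intro hle
      obtain ⟨c, hc1, hc2, hc3⟩ := ih (by omega)
      exact extend_cycle hsemi hstrong c hc1 hc2 x hc3 (by omega)
  obtain ⟨c, hc1, hc2, hc3⟩ := hcyc q (by omega)
  refine ⟨Finset.image c Finset.univ, ?_, ?_, cycle_strong c hc2⟩
  · obtain ⟨i, rfl⟩ := hc3; exact Finset.mem_image_of_mem c (Finset.mem_univ i)
  · rw [Finset.card_image_of_injective _ hc1, Finset.card_univ, Fintype.card_fin]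
end Digraph

/-- The comparison digraph: an arc `i → j` when `a_ij ≥ w_i / w_j`. -/
def effRel {n : ℕ} (A : Matrix (Fin n) (Fin n) ℝ) (w : Fin n → ℝ) :
    Fin n → Fin n → Prop := fun i j => w i / w j ≤ A i j

lemma eff_semi {n : ℕ} {A : Matrix (Fin n) (Fin n) ℝ} {w : Fin n → ℝ}
    (hA : IsReciprocal A) (hw : PosVec w) :
    ∀ a b : Fin n, a ≠ b → effRel A w a b ∨ effRel A w b a := by
  intro a b _
  by_cases h : w a / w b ≤ A a b
  · exact Or.inl h
  · right
    push_neg at h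
    show w b / w a ≤ A b a
    rw [hA.2 a b, div_le_div_iff₀ (hw a) (hA.1 a b)]
    nlinarith [(lt_div_iff₀ (hw b)).mp h, (hw a), (hw b), hA.1 a b]

/-- Strong connectivity of the comparison digraph on `K` implies efficiency of `w[K]`. -/
lemma eff_of_strong {n : ℕ} {A : Matrix (Fin n) (Fin n) ℝ} {w : Fin n → ℝ}
    (hw : PosVec w) (K : Finset (Fin n))
    (hK : StrongOn (effRel A w) K) :
    IsEfficient (keepMat A K) (keepVec w K) := by
  classical
  refine ⟨fun a => hw a.1, ?_⟩
  intro v hv hdom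
  set φ : Fin n → ℝ := fun x => if h : x ∈ K then v ⟨x, h⟩ / w x else 1 with hφ
  have hstep : ∀ a b : Fin n, rK (effRel A w) K a b → φ b ≤ φ a := by
    rintro a b ⟨haK, hbK, hab⟩
    have hab' : w a / w b ≤ A a b := hab
    have hd' : |A a b - v ⟨a, haK⟩ / v ⟨b, hbK⟩| ≤ |A a b - w a / w b| :=
      hdom ⟨a, haK⟩ ⟨b, hbK⟩
    rw [abs_of_nonneg (sub_nonneg.mpr hab')] at hd'
    have h2 := (abs_le.mp hd').2
    have h3 : w a / w b ≤ v ⟨a, haK⟩ / v ⟨b, hbK⟩ := by linarith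
    rw [div_le_div_iff₀ (hw b) (hv ⟨b, hbK⟩)] at h3
    simp only [hφ, dif_pos haK, dif_pos hbK]
    rw [div_le_div_iff₀ (hw b) (hw a)]
    nlinarith [hv ⟨b, hbK⟩, hw a, hw b]
  have hmono : ∀ a b : Fin n, Relation.ReflTransGen (rK (effRel A w) K) a b →
      φ b ≤ φ a := by
    intro a b h
    induction h with
    | refl => exact le_refl _
    | tail _ hr ih => exact le_trans (hstep _ _ hr) ih
  by_cases hne : Nonempty {i : Fin n // i ∈ K}
  · obtain ⟨a₀⟩ := hne
    refine ⟨v a₀ / w a₀.1, div_pos (hv a₀) (hw a₀.1), funext fun a => ?_⟩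
    have hconst : φ a.1 = φ a₀.1 :=
      le_antisymm (hmono _ _ (hK a₀.1 a₀.2 a.1 a.2)) (hmono _ _ (hK a.1 a.2 a₀.1 a₀.2))
    simp only [hφ, dif_pos a.2, dif_pos a₀.2] at hconst
    have hwa := (hw a.1).ne'
    have hwa0 := (hw a₀.1).ne'
    show v a = (v a₀ / w a₀.1) * keepVec w K a
    show v a = (v a₀ / w a₀.1) * w a.1
    field_simp at hconst ⊢
    linear_combination hconst
  · exact ⟨1, one_pos, funext fun a => absurd ⟨a⟩ hne⟩

/-- Efficiency of `w` implies the comparison digraph is strongly connected. -/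
lemma strong_of_eff {n : ℕ} {A : Matrix (Fin n) (Fin n) ℝ} {w : Fin n → ℝ}
    (hA : IsReciprocal A) (hw : IsEfficient A w) :
    StrongOn (effRel A w) Finset.univ := by
  classical
  intro a _ b _
  by_contra hnr
  set R : Set (Fin n) := {y | Relation.ReflTransGen (rK (effRel A w) Finset.univ) a y}
    with hR
  have haR : a ∈ R := Relation.ReflTransGen.refl
  have hbR : b ∉ R := hnr
  have hwp := hw.1
  have key : ∀ i ∈ R, ∀ j ∉ R, A i j * w j < w i := by
    intro i hiR j hjR
    by_contra hle
    push_neg at hle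
    have harc : effRel A w i j := by
      show w i / w j ≤ A i j
      rw [div_le_iff₀ (hwp j)]; nlinarith
    exact hjR (Relation.ReflTransGen.tail hiR ⟨Finset.mem_univ _, Finset.mem_univ _, harc⟩)
  have key2 : ∀ i ∈ R, ∀ j ∉ R, w j < A j i * w i := by
    intro i hiR j hjR
    have h1 := key i hiR j hjR
    rw [hA.2 i j, one_div, inv_mul_eq_div, lt_div_iff₀ (hA.1 i j)]
    nlinarith
  set g : Fin n × Fin n → ℝ := fun p =>
    if p.1 ∈ R ∧ p.2 ∉ R then
      min (w p.1 / (w p.2 * A p.1 p.2)) (2 * A p.2 p.1 * w p.1 / w p.2 - 1)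
    else 2 with hg
  have hne : (Finset.univ : Finset (Fin n × Fin n)).Nonempty := ⟨(a, b), Finset.mem_univ _⟩
  set t : ℝ := Finset.univ.inf' hne g with ht
  have ht1 : 1 < t := by
    rw [ht, Finset.lt_inf'_iff]
    intro p _
    rw [hg]
    dsimp only
    by_cases hp : p.1 ∈ R ∧ p.2 ∉ R
    · rw [if_pos hp, lt_min_iff]
      have h1 := key p.1 hp.1 p.2 hp.2
      have h2 := key2 p.1 hp.1 p.2 hp.2
      have hA1 := hA.1 p.1 p.2
      have hw1 := hwp p.1
      have hw2 := hwp p.2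
      constructor
      · rw [lt_div_iff₀ (by positivity)]; nlinarith
      · rw [lt_sub_iff_add_lt, lt_div_iff₀ hw2]; nlinarith
    · rw [if_neg hp]; norm_num
  have ht0 : 0 < t := lt_trans one_pos ht1
  have hb1 : ∀ i ∈ R, ∀ j ∉ R, t * (w j * A i j) ≤ w i := by
    intro i hiR j hjR
    have hle : t ≤ g (i, j) := Finset.inf'_le g (Finset.mem_univ _)
    rw [hg] at hle
    simp only [if_pos (show (i, j).1 ∈ R ∧ (i, j).2 ∉ R from ⟨hiR, hjR⟩)] at hle
    have hthis := le_trans hle (min_le_left _ _)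
    rw [le_div_iff₀ (mul_pos (hwp j) (hA.1 i j))] at hthis
    nlinarith
  have hb2 : ∀ i ∈ R, ∀ j ∉ R, (t + 1) * w j ≤ 2 * A j i * w i := by
    intro i hiR j hjR
    have hle : t ≤ g (i, j) := Finset.inf'_le g (Finset.mem_univ _)
    rw [hg] at hle
    simp only [if_pos (show (i, j).1 ∈ R ∧ (i, j).2 ∉ R from ⟨hiR, hjR⟩)] at hle
    have h := le_trans hle (min_le_right _ _)
    have h' : t + 1 ≤ 2 * A j i * w i / w j := by linarith
    rw [le_div_iff₀ (hwp j)] at h'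
    nlinarith
  set v : Fin n → ℝ := fun x => if x ∈ R then w x else t * w x with hvdef
  have hvpos : PosVec v := by
    intro x
    rw [hvdef]
    dsimp only
    split_ifs with h
    · exact hwp x
    · exact mul_pos ht0 (hwp x)
  have hdom : ∀ i j, |A i j - v i / v j| ≤ |A i j - w i / w j| := by
    intro i j
    by_cases hi : i ∈ R <;> by_cases hj : j ∈ R
    · simp only [hvdef, if_pos hi, if_pos hj]; exact le_refl _
    · simp only [hvdef, if_pos hi, if_neg hj]
      have h1 := key i hi j hj
      have hbb := hb1 i hi j hj
      have hA1 := hA.1 i j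
      have hw1 := hwp i
      have hw2 := hwp j
      have hvr_le : w i / (t * w j) ≤ w i / w j := by
        rw [div_le_div_iff₀ (mul_pos ht0 hw2) hw2]; nlinarith [mul_pos hw1 hw2]
      have hA_le : A i j ≤ w i / (t * w j) := by
        rw [le_div_iff₀ (mul_pos ht0 hw2)]; nlinarith
      have hwr : A i j < w i / w j := by rw [lt_div_iff₀ hw2]; nlinarith
      rw [abs_of_nonpos (show A i j - w i / (t * w j) ≤ 0 by linarith),
        abs_of_nonpos (show A i j - w i / w j ≤ 0 by linarith)]
      linarith
    · simp only [hvdef, if_neg hi, if_pos hj]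
      have h2 := key2 j hj i hi
      have hbb := hb2 j hj i hi
      have hA1 := hA.1 i j
      have hw1 := hwp i
      have hw2 := hwp j
      have hgt : w i / w j < A i j := by rw [div_lt_iff₀ hw2]; nlinarith
      have hle1 : w i / w j ≤ t * w i / w j := by
        rw [div_le_div_iff₀ hw2 hw2]; nlinarith [mul_pos hw1 hw2]
      have hle2 : t * w i / w j ≤ 2 * A i j - w i / w j := by
        rw [div_le_iff₀ hw2]
        have hexp : (2 * A i j - w i / w j) * w j = 2 * A i j * w j - w i := by
          field_simp
        rw [hexp]; nlinarith
      rw [abs_of_nonneg (by linarith : (0:ℝ) ≤ A i j - w i / w j), abs_le]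
      constructor <;> linarith
    · simp only [hvdef, if_neg hi, if_neg hj]
      rw [mul_div_mul_left _ _ (ne_of_gt ht0)]
  obtain ⟨c, hc, hveq⟩ := hw.2 v hvpos hdom
  have e1 : v a = c * w a := by rw [hveq]; rfl
  have e2 : v b = c * w b := by rw [hveq]; rfl
  simp only [hvdef, if_pos haR, if_neg hbR] at e1 e2
  have hc1 : (1:ℝ) = c :=
    mul_right_cancel₀ (hwp a).ne' (by linear_combination e1)
  have hc2 : t = c :=
    mul_right_cancel₀ (hwp b).ne' (by linear_combination e2)
  linarith

/-- if `n ≥ 4` and `w` is efficient for the reciprocal matrix `A`, then for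
every `p ∈ {3, …, n-1}` there are two distinct `p`-element index sets `K₁`, `K₂` such that
`w[K₁]` is efficient for `A[K₁]` and `w[K₂]` is efficient for `A[K₂]`. -/
theorem exists_two_efficient_principal_subvectors {n : ℕ} (hn : 4 ≤ n)
    (A : Matrix (Fin n) (Fin n) ℝ) (hA : IsReciprocal A) (w : Fin n → ℝ)
    (hw : IsEfficient A w) (p : ℕ) (hp3 : 3 ≤ p) (hpn : p ≤ n - 1) :
    ∃ K₁ K₂ : Finset (Fin n), K₁ ≠ K₂ ∧ K₁.card = p ∧ K₂.card = p ∧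
      IsEfficient (keepMat A K₁) (keepVec w K₁) ∧
      IsEfficient (keepMat A K₂) (keepVec w K₂) := by
  have hsemi := eff_semi hA hw.1
  have hstrong := strong_of_eff hA hw
  have hcard : Fintype.card (Fin n) = n := Fintype.card_fin n
  obtain ⟨K₁, hx1, hc1, hs1⟩ := moon hsemi hstrong ⟨0, by omega⟩ p hp3
    (by rw [hcard]; omega)
  have hex : ∃ y, y ∉ K₁ := by
    by_contra h
    push_neg at h
    have huniv : K₁ = Finset.univ := Finset.eq_univ_iff_forall.mpr h
    rw [huniv, Finset.card_univ, hcard] at hc1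
    omega
  obtain ⟨y, hy⟩ := hex
  obtain ⟨K₂, hx2, hc2, hs2⟩ := moon hsemi hstrong y p hp3 (by rw [hcard]; omega)
  exact ⟨K₁, K₂, fun h => hy (h ▸ hx2), hc1, hc2,
    eff_of_strong hw.1 K₁ hs1, eff_of_strong hw.1 K₂ hs2⟩
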